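/- Let B ⊆ V be a set of individuals in a bounded-degree pooling graph such that each x ∈ B has degree at most d and any two distinct members of B are at graph distance at least 6. If each individual is infected independently with probability p, then the events {x is totally disguised and infected} for x ∈ B are mutually independent, each occurring with probability at least p·Π_{a ∈ ∂x}(1 - (1-p)^{deg(a)-1}) by the FKG inequality, and hence the number of totally disguised infected individuals in B stochastically dominates a binomial random variable Bin(|B|, p·C·p^d) for a suitable constant C > 0 depending only on the maximum test size. -/
import Mathlib


open Finset
open scoped Classical

/-- Probability of an event under the i.i.d. Bernoulli(p) infection model. -/
noncomputable def prB {V : Type} [Fintype V] [DecidableEq V]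
    (p : ℝ) (E : (V → Bool) → Prop) : ℝ :=
  ∑ σ : V → Bool, if E σ then
    p ^ (Finset.univ.filter fun x => σ x = true).card *
      (1 - p) ^ (Fintype.card V - (Finset.univ.filter fun x => σ x = true).card)
  else 0

/-- The bipartite pooling graph on individuals and tests. -/
def poolGraph {V F : Type} (tests : F → Finset V) : SimpleGraph (V ⊕ F) :=
  SimpleGraph.fromRel (fun u w => ∃ x a, u = Sum.inl x ∧ w = Sum.inr a ∧ x ∈ tests a)

/-- `x` is infected and totally disguised: every test containing `x` contains another
infected individual. -/
def disguisedInf {V F : Type} (tests : F → Finset V) (x : V) (σ : V → Bool) : Prop :=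
  σ x = true ∧ ∀ a, x ∈ tests a → ∃ y ∈ tests a, y ≠ x ∧ σ y = true


set_option linter.unusedSectionVars false
set_option maxHeartbeats 1000000

noncomputable def wB (p : ℝ) (b : Bool) : ℝ := if b then p else 1 - p

noncomputable def Ew {V : Type} [Fintype V] [DecidableEq V] (p : ℝ) (f : (V → Bool) → ℝ) : ℝ :=
  ∑ σ : V → Bool, f σ * ∏ x, wB p (σ x)

variable {V : Type} [Fintype V] [DecidableEq V]

lemma W_eq (p : ℝ) (σ : V → Bool) :
    ∏ x, wB p (σ x) =
      p ^ (Finset.univ.filter fun x => σ x = true).card *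
        (1 - p) ^ (Fintype.card V - (Finset.univ.filter fun x => σ x = true).card) := by
  rw [← Finset.prod_filter_mul_prod_filter_not Finset.univ (fun x => σ x = true)]
  have h1 : ∀ x ∈ Finset.univ.filter (fun x => σ x = true), wB p (σ x) = p := by
    intro x hx; simp only [Finset.mem_filter] at hx; simp [wB, hx.2]
  have h2 : ∀ x ∈ Finset.univ.filter (fun x => ¬ σ x = true), wB p (σ x) = 1 - p := by
    intro x hx; simp only [Finset.mem_filter, Bool.not_eq_true] at hx
    simp [wB, hx.2]
  rw [Finset.prod_congr rfl h1, Finset.prod_congr rfl h2, Finset.prod_const,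
    Finset.prod_const]
  congr 2
  have := Finset.card_filter_add_card_filter_not (s := (Finset.univ : Finset V))
    (fun x => σ x = true)
  simp only [Finset.card_univ] at this
  omega

lemma prB_eq_Ew (p : ℝ) (E : (V → Bool) → Prop) :
    prB p E = Ew p (fun σ => if E σ then 1 else 0) := by
  unfold prB Ew
  refine Finset.sum_congr rfl fun σ _ => ?_
  rw [W_eq]
  by_cases h : E σ <;> simp [h]

lemma sum_prod_bool (h : V → Bool → ℝ) :
    ∑ σ : V → Bool, ∏ x, h x (σ x) = ∏ x, (h x false + h x true) := by
  have : ∀ x : V, h x false + h x true = ∑ b ∈ (Finset.univ : Finset Bool), h x b := by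
    intro x; rw [Fintype.sum_bool]; ring
  simp_rw [this]
  rw [Finset.prod_univ_sum, Fintype.piFinset_univ]

lemma sum_W (p : ℝ) : ∑ σ : V → Bool, ∏ x, wB p (σ x) = 1 := by
  rw [sum_prod_bool]; simp [wB]

lemma prB_true (p : ℝ) (E : (V → Bool) → Prop) (hE : ∀ σ, E σ) : prB p E = 1 := by
  rw [prB_eq_Ew]
  simp only [hE, if_true]
  simpa [Ew] using sum_W (V := V) p

lemma prB_congr (p : ℝ) {E F : (V → Bool) → Prop} (h : ∀ σ, E σ ↔ F σ) :
    prB p E = prB p F := by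
  unfold prB; exact Finset.sum_congr rfl fun σ _ => by rw [iff_iff_eq.mp (h σ)]

lemma W_nonneg {p : ℝ} (hp0 : 0 ≤ p) (hp1 : p ≤ 1) (σ : V → Bool) :
    0 ≤ ∏ x, wB p (σ x) :=
  Finset.prod_nonneg fun x _ => by cases σ x <;> simp [wB] <;> linarith

lemma prB_nonneg {p : ℝ} (hp0 : 0 ≤ p) (hp1 : p ≤ 1) (E : (V → Bool) → Prop) :
    0 ≤ prB p E := by
  rw [prB_eq_Ew]
  refine Finset.sum_nonneg fun σ _ => ?_
  have := W_nonneg (V := V) hp0 hp1 σ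
  by_cases h : E σ <;> simp [h, this]

lemma prB_mono {p : ℝ} (hp0 : 0 ≤ p) (hp1 : p ≤ 1) {E F : (V → Bool) → Prop}
    (h : ∀ σ, E σ → F σ) : prB p E ≤ prB p F := by
  rw [prB_eq_Ew, prB_eq_Ew]
  refine Finset.sum_le_sum fun σ _ => ?_
  have hW := W_nonneg (V := V) hp0 hp1 σ
  by_cases hE : E σ
  · simp [hE, h σ hE]
  · by_cases hF : F σ <;> simp [hE, hF, hW]

lemma prB_le_one {p : ℝ} (hp0 : 0 ≤ p) (hp1 : p ≤ 1) (E : (V → Bool) → Prop) :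
    prB p E ≤ 1 := by
  have := prB_mono (V := V) hp0 hp1 (F := fun _ => True) (fun σ hE => trivial) (E := E)
  rwa [prB_true p _ (fun _ => trivial)] at this

lemma prB_add_not (p : ℝ) (E : (V → Bool) → Prop) :
    prB p E + prB p (fun σ => ¬ E σ) = 1 := by
  rw [prB_eq_Ew, prB_eq_Ew, Ew, Ew, ← Finset.sum_add_distrib]
  conv_rhs => rw [← sum_W (V := V) p]
  refine Finset.sum_congr rfl fun σ _ => ?_
  by_cases h : E σ
  · rw [if_pos h, if_neg (not_not_intro h)]; ring
  · rw [if_neg h, if_pos h]; ring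

lemma prB_or_disjoint (p : ℝ) {E F : (V → Bool) → Prop} (h : ∀ σ, ¬ (E σ ∧ F σ)) :
    prB p (fun σ => E σ ∨ F σ) = prB p E + prB p F := by
  rw [prB_eq_Ew, prB_eq_Ew, prB_eq_Ew, Ew, Ew, Ew, ← Finset.sum_add_distrib]
  refine Finset.sum_congr rfl fun σ _ => ?_
  by_cases hE : E σ
  · have hF : ¬ F σ := fun hF => h σ ⟨hE, hF⟩
    simp [hE, hF]
  · by_cases hF : F σ <;> simp [hE, hF]

noncomputable section P2
variable {V : Type} [Fintype V] [DecidableEq V]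

/-- merge: value `b` at `x`, `τ` elsewhere. -/
def mrg (x : V) (b : Bool) (τ : {j // j ≠ x} → Bool) : V → Bool :=
  fun y => if h : y = x then b else τ ⟨y, h⟩

lemma mrg_eq_symm (x : V) (b : Bool) (τ : {j // j ≠ x} → Bool) :
    (Equiv.funSplitAt x Bool).symm (b, τ) = mrg x b τ := by
  funext y
  simp [Equiv.funSplitAt, Equiv.piSplitAt, mrg]

lemma update_mrg (x : V) (b c : Bool) (τ : {j // j ≠ x} → Bool) :
    Function.update (mrg x b τ) x c = mrg x c τ := by
  funext y
  rcases eq_or_ne y x with h | h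
  · subst h; simp [mrg]
  · rw [Function.update_apply, if_neg h]; simp [mrg, h]

lemma W_mrg (p : ℝ) (x : V) (b : Bool) (τ : {j // j ≠ x} → Bool) :
    ∏ y, wB p (mrg x b τ y) = wB p b * ∏ j, wB p (τ j) := by
  rw [← Finset.mul_prod_erase Finset.univ _ (Finset.mem_univ x)]
  congr 1
  · simp [mrg]
  · rw [Finset.prod_subtype (Finset.univ.erase x) (p := fun y => y ≠ x) (by simp)
      (fun y => wB p (mrg x b τ y))]
    refine Finset.prod_congr rfl fun j _ => ?_
    simp [mrg, j.2]

lemma Ew_split (p : ℝ) (x : V) (f : (V → Bool) → ℝ) :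
    Ew p f = ∑ τ : {j // j ≠ x} → Bool,
      ((1 - p) * f (mrg x false τ) + p * f (mrg x true τ)) * ∏ j, wB p (τ j) := by
  unfold Ew
  rw [← Equiv.sum_comp (Equiv.funSplitAt x Bool).symm
    (fun σ => f σ * ∏ y, wB p (σ y))]
  rw [Fintype.sum_prod_type]
  rw [Fintype.sum_bool]
  rw [← Finset.sum_add_distrib]
  refine Finset.sum_congr rfl fun τ _ => ?_
  simp only [mrg_eq_symm, W_mrg]
  have h1 : wB p true = p := rfl
  have h2 : wB p false = 1 - p := rfl
  rw [h1, h2]; ring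

/-- the single-site averaging operator -/
def Tx (p : ℝ) (x : V) (f : (V → Bool) → ℝ) : (V → Bool) → ℝ :=
  fun σ => (1 - p) * f (Function.update σ x false) + p * f (Function.update σ x true)

lemma Ew_Tx (p : ℝ) (x : V) (f : (V → Bool) → ℝ) : Ew p (Tx p x f) = Ew p f := by
  rw [Ew_split p x (Tx p x f), Ew_split p x f]
  refine Finset.sum_congr rfl fun τ _ => ?_
  simp only [Tx, update_mrg]
  ring

lemma update_le_update {σ τ : V → Bool} (h : σ ≤ τ) (x : V) (b : Bool) :
    Function.update σ x b ≤ Function.update τ x b := by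
  intro y
  rcases eq_or_ne y x with hy | hy
  · subst hy; simp
  · rw [Function.update_apply, Function.update_apply, if_neg hy, if_neg hy]
    exact h y

lemma update_false_le_true (σ : V → Bool) (x : V) :
    Function.update σ x false ≤ Function.update σ x true := by
  intro y
  rcases eq_or_ne y x with hy | hy
  · subst hy; simp
  · rw [Function.update_apply, Function.update_apply, if_neg hy, if_neg hy]

lemma Tx_monotone {p : ℝ} (hp0 : 0 ≤ p) (hp1 : p ≤ 1) (x : V) {f : (V → Bool) → ℝ}
    (hf : Monotone f) : Monotone (Tx p x f) := by
  intro σ τ h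
  unfold Tx
  have h1 := hf (update_le_update h x false)
  have h2 := hf (update_le_update h x true)
  have := sub_nonneg.mpr hp1
  nlinarith

lemma Tx_mul_le {p : ℝ} (hp0 : 0 ≤ p) (hp1 : p ≤ 1) (x : V) {f g : (V → Bool) → ℝ}
    (hf : Monotone f) (hg : Monotone g) (σ : V → Bool) :
    Tx p x f σ * Tx p x g σ ≤ Tx p x (fun σ => f σ * g σ) σ := by
  unfold Tx
  dsimp only
  have h1 := hf (update_false_le_true σ x)
  have h2 := hg (update_false_le_true σ x)
  nlinarith [mul_nonneg (mul_nonneg hp0 (sub_nonneg.mpr hp1))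
    (mul_nonneg (sub_nonneg.mpr h1) (sub_nonneg.mpr h2))]

lemma Ew_mono {p : ℝ} (hp0 : 0 ≤ p) (hp1 : p ≤ 1) {f g : (V → Bool) → ℝ}
    (h : ∀ σ, f σ ≤ g σ) : Ew p f ≤ Ew p g :=
  Finset.sum_le_sum fun σ _ => mul_le_mul_of_nonneg_right (h σ) (W_nonneg hp0 hp1 σ)

/-- `f` depends only on coordinates in `s` -/
def dOnF (s : Finset V) (f : (V → Bool) → ℝ) : Prop :=
  ∀ σ τ : V → Bool, (∀ y ∈ s, σ y = τ y) → f σ = f τ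

lemma dOnF_Tx {s : Finset V} {x : V} {f : (V → Bool) → ℝ} (p : ℝ)
    (hf : dOnF (insert x s) f) : dOnF s (Tx p x f) := by
  intro σ τ h
  unfold Tx
  have key : ∀ b : Bool, f (Function.update σ x b) = f (Function.update τ x b) := by
    intro b
    refine hf _ _ fun y hy => ?_
    rcases eq_or_ne y x with hyx | hyx
    · subst hyx; simp
    · rw [Function.update_apply, Function.update_apply, if_neg hyx, if_neg hyx]
      exact h y ((Finset.mem_insert.mp hy).resolve_left hyx)
  rw [key false, key true]

lemma Ew_const_of_dOnF_empty {p : ℝ} {f : (V → Bool) → ℝ} (hf : dOnF ∅ f) :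
    Ew p f = f (fun _ => false) := by
  unfold Ew
  have : ∀ σ : V → Bool, f σ = f (fun _ => false) :=
    fun σ => hf σ _ (fun y hy => absurd hy (Finset.notMem_empty y))
  calc ∑ σ : V → Bool, f σ * ∏ x, wB p (σ x)
      = ∑ σ : V → Bool, f (fun _ => false) * ∏ x, wB p (σ x) :=
        Finset.sum_congr rfl fun σ _ => by rw [this σ]
    _ = f (fun _ => false) * ∑ σ : V → Bool, ∏ x, wB p (σ x) := by
        rw [Finset.mul_sum]
    _ = f (fun _ => false) := by rw [sum_W]; ring

lemma harris_aux {p : ℝ} (hp0 : 0 ≤ p) (hp1 : p ≤ 1) (s : Finset V) :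
    ∀ f g : (V → Bool) → ℝ, Monotone f → Monotone g → dOnF s f → dOnF s g →
      Ew p f * Ew p g ≤ Ew p (fun σ => f σ * g σ) := by
  induction s using Finset.induction_on with
  | empty =>
    intro f g _ _ hdf hdg
    have hfg : dOnF ∅ (fun σ => f σ * g σ) := fun σ τ h => by
      show f σ * g σ = f τ * g τ
      rw [hdf σ τ h, hdg σ τ h]
    rw [Ew_const_of_dOnF_empty hdf, Ew_const_of_dOnF_empty hdg,
      Ew_const_of_dOnF_empty hfg]
  | @insert x s' hx ih =>
    intro f g hf hg hdf hdg
    calc Ew p f * Ew p g = Ew p (Tx p x f) * Ew p (Tx p x g) := by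
          rw [Ew_Tx, Ew_Tx]
      _ ≤ Ew p (fun σ => Tx p x f σ * Tx p x g σ) :=
          ih _ _ (Tx_monotone hp0 hp1 x hf) (Tx_monotone hp0 hp1 x hg)
            (dOnF_Tx p hdf) (dOnF_Tx p hdg)
      _ ≤ Ew p (Tx p x (fun σ => f σ * g σ)) :=
          Ew_mono hp0 hp1 (Tx_mul_le hp0 hp1 x hf hg)
      _ = Ew p (fun σ => f σ * g σ) := Ew_Tx p x _

lemma harris {p : ℝ} (hp0 : 0 ≤ p) (hp1 : p ≤ 1) {f g : (V → Bool) → ℝ}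
    (hf : Monotone f) (hg : Monotone g) :
    Ew p f * Ew p g ≤ Ew p (fun σ => f σ * g σ) := by
  refine harris_aux hp0 hp1 Finset.univ f g hf hg ?_ ?_ <;>
  · intro σ τ h
    have : σ = τ := funext fun y => h y (Finset.mem_univ y)
    rw [this]

/-- increasing event -/
def IncrE {V : Type} (E : (V → Bool) → Prop) : Prop :=
  ∀ ⦃σ τ : V → Bool⦄, σ ≤ τ → E σ → E τ

lemma indicator_monotone {E : (V → Bool) → Prop} (hE : IncrE E) :
    Monotone (fun σ => if E σ then (1:ℝ) else 0) := by
  intro σ τ h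
  by_cases hσ : E σ
  · simp [hσ, hE h hσ]
  · by_cases hτ : E τ <;> simp [hσ, hτ]

lemma prB_harris {p : ℝ} (hp0 : 0 ≤ p) (hp1 : p ≤ 1) {E F : (V → Bool) → Prop}
    (hE : IncrE E) (hF : IncrE F) :
    prB p E * prB p F ≤ prB p (fun σ => E σ ∧ F σ) := by
  rw [prB_eq_Ew, prB_eq_Ew, prB_eq_Ew]
  have heq : Ew p (fun σ => @ite ℝ (E σ ∧ F σ) (Classical.propDecidable _) 1 0) =
      Ew p (fun σ => (if E σ then (1:ℝ) else 0) * (if F σ then (1:ℝ) else 0)) := by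
    refine Finset.sum_congr rfl fun σ _ => ?_
    by_cases h1 : E σ <;> by_cases h2 : F σ <;> simp [h1, h2]
  exact (harris hp0 hp1 (indicator_monotone hE)
    (indicator_monotone hF)).trans (le_of_eq heq.symm)

lemma IncrE_forall {ι : Type*} (s : Finset ι) (A : ι → (V → Bool) → Prop)
    (hA : ∀ i ∈ s, IncrE (A i)) : IncrE (fun σ => ∀ i ∈ s, A i σ) :=
  fun σ τ h hσ i hi => hA i hi h (hσ i hi)

lemma prB_harris_prod {p : ℝ} (hp0 : 0 ≤ p) (hp1 : p ≤ 1) {ι : Type*}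
    (s : Finset ι) (A : ι → (V → Bool) → Prop) (hA : ∀ i ∈ s, IncrE (A i)) :
    ∏ i ∈ s, prB p (A i) ≤ prB p (fun σ => ∀ i ∈ s, A i σ) := by
  induction s using Finset.induction_on with
  | empty =>
    rw [Finset.prod_empty,
      prB_true p _ (fun σ i hi => absurd hi (Finset.notMem_empty i))]
  | @insert i s' hi ih =>
    have hAi : IncrE (A i) := hA i (Finset.mem_insert_self i s')
    have hconj : prB p (fun σ => A i σ ∧ ∀ j ∈ s', A j σ) =
        prB p (fun σ => ∀ j ∈ insert i s', A j σ) := by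
      refine prB_congr p fun σ => ?_
      constructor
      · rintro ⟨h1, h2⟩ j hj
        rcases Finset.mem_insert.mp hj with rfl | hj'
        · exact h1
        · exact h2 j hj'
      · intro h
        exact ⟨h i (Finset.mem_insert_self i s'),
          fun j hj => h j (Finset.mem_insert_of_mem hj)⟩
    rw [Finset.prod_insert hi, ← hconj]
    calc prB p (A i) * ∏ j ∈ s', prB p (A j)
        ≤ prB p (A i) * prB p (fun σ => ∀ j ∈ s', A j σ) := by
          refine mul_le_mul_of_nonneg_left ?_ (prB_nonneg hp0 hp1 _)
          exact ih (fun j hj => hA j (Finset.mem_insert_of_mem hj))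
      _ ≤ prB p (fun σ => A i σ ∧ ∀ j ∈ s', A j σ) :=
          prB_harris hp0 hp1 hAi
            (IncrE_forall s' A (fun j hj => hA j (Finset.mem_insert_of_mem hj)))
end P2

section P3
variable {V : Type} [Fintype V] [DecidableEq V]

/-- event depends only on coordinates in `s` -/
def dOnE {V : Type} (s : Finset V) (E : (V → Bool) → Prop) : Prop :=
  ∀ σ τ : V → Bool, (∀ y ∈ s, σ y = τ y) → (E σ ↔ E τ)

/-- merge along a finset -/
noncomputable def mg (T : Finset V) (σ τ : V → Bool) : V → Bool :=
  fun y => if y ∈ T then σ y else τ y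

lemma mg_invol (T : Finset V) (σ τ : V → Bool) :
    mg T (mg T σ τ) (mg T τ σ) = σ := by
  funext y; by_cases h : y ∈ T <;> simp [mg, h]

lemma W_mg (p : ℝ) (T : Finset V) (σ τ : V → Bool) :
    (∏ y, wB p (mg T σ τ y)) * ∏ y, wB p (mg T τ σ y) =
      (∏ y, wB p (σ y)) * ∏ y, wB p (τ y) := by
  rw [← Finset.prod_mul_distrib, ← Finset.prod_mul_distrib]
  refine Finset.prod_congr rfl fun y _ => ?_
  by_cases h : y ∈ T <;> simp [mg, h, mul_comm]

lemma prB_factor (p : ℝ) (T : Finset V) {E G : (V → Bool) → Prop}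
    (hE : ∀ σ τ : V → Bool, (∀ y ∈ T, σ y = τ y) → (E σ ↔ E τ))
    (hG : ∀ σ τ : V → Bool, (∀ y ∉ T, σ y = τ y) → (G σ ↔ G τ)) :
    prB p (fun σ => E σ ∧ G σ) = prB p E * prB p G := by
  rw [prB_eq_Ew, prB_eq_Ew, prB_eq_Ew]
  unfold Ew
  dsimp only
  rw [Finset.sum_mul_sum]
  have hinv : Function.Involutive
      (fun st : (V → Bool) × (V → Bool) => (mg T st.1 st.2, mg T st.2 st.1)) := by
    intro ⟨σ, τ⟩
    simp only [Prod.mk.injEq]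
    exact ⟨mg_invol T σ τ, mg_invol T τ σ⟩
  have key : ∀ σ τ : V → Bool,
      ((if E (mg T σ τ) then (1:ℝ) else 0) * ∏ y, wB p (mg T σ τ y)) *
        ((if G (mg T τ σ) then (1:ℝ) else 0) * ∏ y, wB p (mg T τ σ y)) =
      ((if E σ then (1:ℝ) else 0) * (if G σ then (1:ℝ) else 0) * ∏ y, wB p (σ y)) *
        ∏ y, wB p (τ y) := by
    intro σ τ
    have hEe : E (mg T σ τ) ↔ E σ := hE _ _ (fun y hy => by simp [mg, hy])
    have hGe : G (mg T τ σ) ↔ G σ := hG _ _ (fun y hy => by simp [mg, hy])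
    have hW := W_mg p T σ τ
    rw [iff_iff_eq.mp hEe, iff_iff_eq.mp hGe]
    calc (if E σ then (1:ℝ) else 0) * (∏ y, wB p (mg T σ τ y)) *
          ((if G σ then (1:ℝ) else 0) * ∏ y, wB p (mg T τ σ y))
        = (if E σ then (1:ℝ) else 0) * (if G σ then (1:ℝ) else 0) *
            ((∏ y, wB p (mg T σ τ y)) * ∏ y, wB p (mg T τ σ y)) := by ring
      _ = _ := by rw [hW]; ring
  calc ∑ σ : V → Bool, (@ite ℝ (E σ ∧ G σ) (Classical.propDecidable _) 1 0) * ∏ y, wB p (σ y)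
      = ∑ σ : V → Bool, ((if E σ then (1:ℝ) else 0) * (if G σ then (1:ℝ) else 0) *
          ∏ y, wB p (σ y)) * ∑ τ : V → Bool, ∏ y, wB p (τ y) := by
        rw [sum_W]
        refine Finset.sum_congr rfl fun σ _ => ?_
        by_cases h1 : E σ <;> by_cases h2 : G σ <;> simp [h1, h2]
    _ = ∑ σ : V → Bool, ∑ τ : V → Bool,
          ((if E σ then (1:ℝ) else 0) * (if G σ then (1:ℝ) else 0) *
            ∏ y, wB p (σ y)) * ∏ y, wB p (τ y) := by
        refine Finset.sum_congr rfl fun σ _ => by rw [Finset.mul_sum]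
    _ = ∑ σ : V → Bool, ∑ τ : V → Bool,
          ((if E (mg T σ τ) then (1:ℝ) else 0) * ∏ y, wB p (mg T σ τ y)) *
            ((if G (mg T τ σ) then (1:ℝ) else 0) * ∏ y, wB p (mg T τ σ y)) := by
        refine Finset.sum_congr rfl fun σ _ => Finset.sum_congr rfl fun τ _ => ?_
        rw [key]
    _ = ∑ σ : V → Bool, ∑ τ : V → Bool,
          ((if E σ then (1:ℝ) else 0) * ∏ y, wB p (σ y)) *
            ((if G τ then (1:ℝ) else 0) * ∏ y, wB p (τ y)) := by
        rw [← Fintype.sum_prod_type', ← Fintype.sum_prod_type']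
        exact Fintype.sum_equiv (hinv.toPerm _) _ _ (fun st => rfl)

lemma prB_coord (p : ℝ) (x : V) : prB p (fun σ => σ x = true) = p := by
  rw [prB_eq_Ew]
  unfold Ew
  dsimp only
  have key : ∀ σ : V → Bool,
      (@ite ℝ (σ x = true) (Classical.propDecidable _) 1 0) * ∏ y, wB p (σ y) =
        ∏ y, (if y = x then (if σ y then p else 0) else wB p (σ y)) := by
    intro σ
    rw [← Finset.mul_prod_erase Finset.univ
        (fun y => if y = x then (if σ y then p else 0) else wB p (σ y)) (Finset.mem_univ x),
      ← Finset.mul_prod_erase Finset.univ (fun y => wB p (σ y)) (Finset.mem_univ x)]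
    have h2 : ∏ y ∈ Finset.univ.erase x,
        (if y = x then (if σ y then p else 0) else wB p (σ y)) =
        ∏ y ∈ Finset.univ.erase x, wB p (σ y) := by
      refine Finset.prod_congr rfl fun y hy => ?_
      rw [if_neg (Finset.mem_erase.mp hy).1]
    rw [h2, if_pos rfl]
    cases h : σ x <;> simp [h, wB]
  rw [Finset.sum_congr rfl fun σ _ => key σ]
  rw [show (∑ σ : V → Bool, ∏ y, (if y = x then (if σ y then p else 0) else wB p (σ y)))
      = ∏ y : V, ((if y = x then (if false then p else 0) else wB p false) +
        (if y = x then (if true then p else 0) else wB p true)) from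
    sum_prod_bool (fun y b => if y = x then (if b then p else 0) else wB p b)]
  have : ∀ y : V, ((if y = x then (if false then p else 0) else wB p false) +
      (if y = x then (if true then p else 0) else wB p true)) = if y = x then p else 1 := by
    intro y
    by_cases h : y = x <;> simp [h, wB]
  rw [Finset.prod_congr rfl fun y _ => this y, Finset.prod_ite_eq' Finset.univ x (fun _ => p),
    if_pos (Finset.mem_univ x)]

lemma prB_allFalse (p : ℝ) (s : Finset V) :
    prB p (fun σ => ∀ y ∈ s, σ y = false) = (1 - p) ^ s.card := by
  rw [prB_eq_Ew]
  unfold Ew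
  dsimp only
  have key : ∀ σ : V → Bool,
      (@ite ℝ (∀ y ∈ s, σ y = false) (Classical.propDecidable _) 1 0) * ∏ y, wB p (σ y) =
        ∏ y, (if y ∈ s then (if σ y then 0 else 1 - p) else wB p (σ y)) := by
    intro σ
    by_cases h : ∀ y ∈ s, σ y = false
    · rw [if_pos h, one_mul]
      refine Finset.prod_congr rfl fun y _ => ?_
      by_cases hy : y ∈ s
      · rw [if_pos hy, h y hy]; simp [wB]
      · rw [if_neg hy]
    · rw [if_neg h, zero_mul]
      push_neg at h
      obtain ⟨y₀, hy₀, hσ⟩ := h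
      replace hσ : σ y₀ = true := by simpa using hσ
      refine (Finset.prod_eq_zero (Finset.mem_univ y₀) ?_).symm
      rw [if_pos hy₀, hσ, if_pos rfl]
  rw [Finset.sum_congr rfl fun σ _ => key σ]
  rw [show (∑ σ : V → Bool, ∏ y, (if y ∈ s then (if σ y then 0 else 1 - p) else wB p (σ y)))
      = ∏ y : V, ((if y ∈ s then (if false then 0 else 1 - p) else wB p false) +
        (if y ∈ s then (if true then 0 else 1 - p) else wB p true)) from
    sum_prod_bool (fun y b => if y ∈ s then (if b then 0 else 1 - p) else wB p b)]
  have : ∀ y : V, ((if y ∈ s then (if false then 0 else 1 - p) else wB p false) +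
      (if y ∈ s then (if true then 0 else 1 - p) else wB p true)) =
        if y ∈ s then 1 - p else 1 := by
    intro y
    by_cases h : y ∈ s <;> simp [h, wB]
  rw [Finset.prod_congr rfl fun y _ => this y, ← Finset.prod_filter_mul_prod_filter_not
    Finset.univ (· ∈ s)]
  have h1 : ∏ y ∈ Finset.univ.filter (· ∈ s), (if y ∈ s then 1 - p else 1) = (1-p)^s.card := by
    rw [Finset.prod_congr rfl fun y hy => if_pos (Finset.mem_filter.mp hy).2,
      Finset.prod_const]
    congr 1
    rw [Finset.filter_univ_mem]
  have h2 : ∏ y ∈ Finset.univ.filter (¬ · ∈ s), (if y ∈ s then 1 - p else 1) = 1 := by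
    rw [Finset.prod_congr rfl fun y hy => if_neg (Finset.mem_filter.mp hy).2,
      Finset.prod_const, one_pow]
  rw [h1, h2, mul_one]

end P3

section P4

noncomputable def binTail (n : ℕ) (q : ℝ) (j : ℕ) : ℝ :=
  ∑ i ∈ Finset.Icc j n, (n.choose i : ℝ) * q ^ i * (1 - q) ^ (n - i)

lemma binTail_zero (n : ℕ) (q : ℝ) : binTail n q 0 = 1 := by
  unfold binTail
  have h1 : Finset.Icc 0 n = Finset.range (n + 1) := by
    ext i; simp [Nat.lt_succ_iff]
  have h2 := add_pow q (1 - q) n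
  rw [show q + (1 - q) = 1 by ring, one_pow] at h2
  rw [h1]
  calc ∑ i ∈ Finset.range (n+1), (n.choose i : ℝ) * q ^ i * (1 - q) ^ (n - i)
      = ∑ i ∈ Finset.range (n+1), q ^ i * (1 - q) ^ (n - i) * (n.choose i : ℝ) :=
        Finset.sum_congr rfl fun i _ => by ring
    _ = 1 := h2.symm

lemma Icc_succ_image (j n : ℕ) :
    Finset.Icc (j+1) (n+1) = Finset.image (· + 1) (Finset.Icc j n) := by
  ext k
  simp only [Finset.mem_image, Finset.mem_Icc]
  constructor
  · intro ⟨h1, h2⟩; exact ⟨k - 1, ⟨by omega, by omega⟩, by omega⟩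
  · rintro ⟨i, ⟨h1, h2⟩, rfl⟩; omega

lemma binTail_succ_succ (n j : ℕ) (q : ℝ) :
    binTail (n+1) q (j+1) = q * binTail n q j + (1 - q) * binTail n q (j+1) := by
  unfold binTail
  rw [Icc_succ_image, Finset.sum_image (fun a _ b _ h => by omega)]
  have hsimp : ∀ i : ℕ, (((n+1).choose (i+1) : ℝ)) * q ^ (i+1) * (1-q) ^ ((n+1)-(i+1)) =
      q * ((n.choose i : ℝ) * q ^ i * (1-q) ^ (n-i)) +
        ((n.choose (i+1) : ℝ) * q ^ (i+1) * (1-q) ^ (n-i)) := by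
    intro i
    rw [show (n+1)-(i+1) = n - i by omega, Nat.choose_succ_succ]
    push_cast; ring
  rw [Finset.sum_congr rfl (fun i _ => hsimp i), Finset.sum_add_distrib, ← Finset.mul_sum]
  congr 1
  rw [Finset.mul_sum]
  have himg : ∑ i ∈ Finset.Icc j n, (n.choose (i+1) : ℝ) * q ^ (i+1) * (1-q) ^ (n-i) =
      ∑ k ∈ Finset.Icc (j+1) (n+1), (n.choose k : ℝ) * q ^ k * (1-q) ^ ((n+1)-k) := by
    rw [Icc_succ_image, Finset.sum_image (fun a _ b _ h => by omega)]
    refine Finset.sum_congr rfl fun i _ => ?_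
    rw [show (n+1)-(i+1) = n - i by omega]
  rw [himg]
  rcases le_or_gt (j+1) (n+1) with h | h
  · rw [Finset.sum_Icc_succ_top h]
    rw [Nat.choose_succ_self]
    push_cast
    rw [zero_mul, zero_mul, add_zero]
    refine Finset.sum_congr rfl fun k hk => ?_
    have hk' : k ≤ n := (Finset.mem_Icc.mp hk).2
    rw [show (n+1)-k = (n-k)+1 by omega, pow_succ]
    ring
  · rw [Finset.Icc_eq_empty (by omega), Finset.Icc_eq_empty (by omega),
      Finset.sum_empty, Finset.sum_empty]

lemma binTail_empty (q : ℝ) (j : ℕ) (hj : 1 ≤ j) : binTail 0 q j = 0 := by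
  unfold binTail
  rw [Finset.Icc_eq_empty (by omega), Finset.sum_empty]

lemma dominate {V : Type} [Fintype V] [DecidableEq V] {p q : ℝ}
    (hp0 : 0 ≤ p) (hp1 : p ≤ 1) (hq0 : 0 ≤ q) (hq1 : q ≤ 1)
    (A : V → (V → Bool) → Prop) (S : V → Finset V) :
    ∀ B : Finset V,
      (∀ x ∈ B, ∀ σ τ : V → Bool, (∀ y ∈ S x, σ y = τ y) → (A x σ ↔ A x τ)) →
      (∀ x ∈ B, ∀ y ∈ B, x ≠ y → Disjoint (S x) (S y)) →
      (∀ x ∈ B, q ≤ prB p (A x)) →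
      ∀ j : ℕ, binTail B.card q j ≤
        prB p (fun σ => j ≤ (B.filter (fun x => A x σ)).card) := by
  intro B
  induction B using Finset.induction_on with
  | empty =>
    intro _ _ _ j
    rcases Nat.eq_zero_or_pos j with rfl | hj
    · rw [Finset.card_empty, binTail_zero, prB_true p _ (fun σ => by simp)]
    · rw [Finset.card_empty, binTail_empty q j hj]
      exact prB_nonneg hp0 hp1 _
  | @insert x B' hx ih =>
    intro hdep hdisj hA j
    have hdep' := fun y hy => hdep y (Finset.mem_insert_of_mem hy)
    have hdisj' := fun y hy z hz hyz =>
      hdisj y (Finset.mem_insert_of_mem hy) z (Finset.mem_insert_of_mem hz) hyz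
    have hA' := fun y hy => hA y (Finset.mem_insert_of_mem hy)
    have iht := ih hdep' hdisj' hA'
    rw [Finset.card_insert_of_notMem hx]
    rcases Nat.eq_zero_or_pos j with rfl | hj
    · rw [binTail_zero, prB_true p _ (fun σ => by simp)]
    obtain ⟨jj, rfl⟩ : ∃ jj, j = jj + 1 := ⟨j - 1, by omega⟩
    -- decompose the event
    have hxnot : ∀ σ : V → Bool, x ∉ B'.filter (fun y => A y σ) :=
      fun σ hc => hx (Finset.mem_filter.mp hc).1
    have hev : ∀ σ : V → Bool,
        (jj + 1 ≤ ((insert x B').filter (fun y => A y σ)).card) ↔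
        ((A x σ ∧ jj ≤ (B'.filter (fun y => A y σ)).card) ∨
          (¬ A x σ ∧ jj + 1 ≤ (B'.filter (fun y => A y σ)).card)) := by
      intro σ
      by_cases h : A x σ
      · rw [Finset.filter_insert, if_pos h, Finset.card_insert_of_notMem (hxnot σ)]
        constructor
        · intro hle
          exact Or.inl ⟨h, by omega⟩
        · rintro (⟨_, hc⟩ | ⟨hc, _⟩)
          · omega
          · exact absurd h hc
      · rw [Finset.filter_insert, if_neg h]
        simp [h]
    rw [prB_congr p hev, prB_or_disjoint p (fun σ h => h.2.1 h.1.1)]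
    -- factorize both parts
    have hGdep : ∀ (m : ℕ) (σ τ : V → Bool), (∀ y ∉ S x, σ y = τ y) →
        ((m ≤ (B'.filter (fun y => A y σ)).card) ↔
          (m ≤ (B'.filter (fun y => A y τ)).card)) := by
      intro m σ τ hagree
      have : B'.filter (fun y => A y σ) = B'.filter (fun y => A y τ) := by
        refine Finset.filter_congr fun y hy => ?_
        have hxy : x ≠ y := fun h => hx (h ▸ hy)
        have hd := hdisj x (Finset.mem_insert_self x B') y
          (Finset.mem_insert_of_mem hy) hxy
        refine hdep y (Finset.mem_insert_of_mem hy) σ τ fun z hz => ?_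
        exact hagree z (Finset.disjoint_right.mp hd hz)
      rw [this]
    have hf1 : prB p (fun σ => A x σ ∧ jj ≤ (B'.filter (fun y => A y σ)).card) =
        prB p (A x) * prB p (fun σ => jj ≤ (B'.filter (fun y => A y σ)).card) :=
      prB_factor p (S x) (hdep x (Finset.mem_insert_self x B')) (hGdep jj)
    have hf2 : prB p (fun σ => ¬ A x σ ∧ jj + 1 ≤ (B'.filter (fun y => A y σ)).card) =
        prB p (fun σ => ¬ A x σ) *
          prB p (fun σ => jj + 1 ≤ (B'.filter (fun y => A y σ)).card) := by
      refine prB_factor p (S x) ?_ (hGdep (jj+1))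
      intro σ τ h
      exact not_congr (hdep x (Finset.mem_insert_self x B') σ τ h)
    rw [hf1, hf2]
    set a := prB p (A x) with ha
    set t0 := prB p (fun σ => jj ≤ (B'.filter (fun y => A y σ)).card) with ht0
    set t1 := prB p (fun σ => jj + 1 ≤ (B'.filter (fun y => A y σ)).card) with ht1
    have hnot : prB p (fun σ => ¬ A x σ) = 1 - a := by
      have := prB_add_not p (A x); linarith
    rw [hnot, binTail_succ_succ]
    have h1 : t1 ≤ t0 := prB_mono hp0 hp1 (fun σ h => by omega)
    have h2 : q ≤ a := hA x (Finset.mem_insert_self x B')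
    have h3 : binTail B'.card q jj ≤ t0 := iht jj
    have h4 : binTail B'.card q (jj+1) ≤ t1 := iht (jj+1)
    have ha1 : a ≤ 1 := prB_le_one hp0 hp1 _
    nlinarith [mul_nonneg (sub_nonneg.mpr h2) (sub_nonneg.mpr h1),
      mul_le_mul_of_nonneg_left h3 hq0,
      mul_le_mul_of_nonneg_left h4 (sub_nonneg.mpr hq1)]

end P4

section P5

variable {V F : Type} [Fintype V] [DecidableEq V] [Fintype F]

/-- closed 2-neighbourhood of an individual -/
noncomputable def nbhd (tests : F → Finset V) (x : V) : Finset V :=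
  insert x ((Finset.univ.filter fun a => x ∈ tests a).biUnion tests)

lemma pool_adj (tests : F → Finset V) {u : V} {a : F} (h : u ∈ tests a) :
    (poolGraph tests).Adj (Sum.inl u) (Sum.inr a) := by
  rw [poolGraph, SimpleGraph.fromRel_adj]
  exact ⟨by simp, Or.inl ⟨u, a, rfl, rfl, h⟩⟩

lemma dist_le_two (tests : F → Finset V) {x y : V} {b : F}
    (hxb : x ∈ tests b) (hyb : y ∈ tests b) :
    (poolGraph tests).dist (Sum.inl x) (Sum.inl y) ≤ 2 := by
  have := SimpleGraph.dist_le (SimpleGraph.Walk.cons (pool_adj tests hxb)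
    (SimpleGraph.Walk.cons (pool_adj tests hyb).symm SimpleGraph.Walk.nil))
  simpa using this

lemma dist_le_four (tests : F → Finset V) {x y z : V} {a b : F}
    (hxa : x ∈ tests a) (hza : z ∈ tests a) (hzb : z ∈ tests b) (hyb : y ∈ tests b) :
    (poolGraph tests).dist (Sum.inl x) (Sum.inl y) ≤ 4 := by
  have := SimpleGraph.dist_le (SimpleGraph.Walk.cons (pool_adj tests hxa)
    (SimpleGraph.Walk.cons (pool_adj tests hza).symm
      (SimpleGraph.Walk.cons (pool_adj tests hzb)
        (SimpleGraph.Walk.cons (pool_adj tests hyb).symm SimpleGraph.Walk.nil))))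
  simpa using this

lemma nbhd_disjoint (tests : F → Finset V) {x y : V} (hxy : x ≠ y)
    (hdist : 6 ≤ (poolGraph tests).dist (Sum.inl x) (Sum.inl y)) :
    Disjoint (nbhd tests x) (nbhd tests y) := by
  rw [Finset.disjoint_left]
  intro z hzx hzy
  rcases Finset.mem_insert.mp hzx with rfl | hz1
  · rcases Finset.mem_insert.mp hzy with rfl | hz2
    · exact hxy rfl
    · obtain ⟨b, hb, hzb⟩ := Finset.mem_biUnion.mp hz2
      have hyb : y ∈ tests b := (Finset.mem_filter.mp hb).2
      have := dist_le_two tests hzb hyb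
      omega
  · rcases Finset.mem_insert.mp hzy with rfl | hz2
    · obtain ⟨a, ha, hza⟩ := Finset.mem_biUnion.mp hz1
      have hxa : x ∈ tests a := (Finset.mem_filter.mp ha).2
      have := dist_le_two tests hxa hza
      omega
    · obtain ⟨a, ha, hza⟩ := Finset.mem_biUnion.mp hz1
      obtain ⟨b, hb, hzb⟩ := Finset.mem_biUnion.mp hz2
      have hxa : x ∈ tests a := (Finset.mem_filter.mp ha).2
      have hyb : y ∈ tests b := (Finset.mem_filter.mp hb).2
      have := dist_le_four tests hxa hza hzb hyb
      omega

lemma disg_dep (tests : F → Finset V) (x : V) :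
    ∀ σ τ : V → Bool, (∀ y ∈ nbhd tests x, σ y = τ y) →
      (disguisedInf tests x σ ↔ disguisedInf tests x τ) := by
  have key : ∀ σ τ : V → Bool, (∀ y ∈ nbhd tests x, σ y = τ y) →
      disguisedInf tests x σ → disguisedInf tests x τ := by
    intro σ τ h ⟨h1, h2⟩
    constructor
    · rw [← h x (Finset.mem_insert_self _ _)]; exact h1
    · intro a ha
      obtain ⟨y, hy, hyx, hys⟩ := h2 a ha
      refine ⟨y, hy, hyx, ?_⟩
      rw [← h y (Finset.mem_insert_of_mem (Finset.mem_biUnion.mpr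
        ⟨a, Finset.mem_filter.mpr ⟨Finset.mem_univ a, ha⟩, hy⟩))]
      exact hys
  intro σ τ h
  exact ⟨key σ τ h, key τ σ (fun y hy => (h y hy).symm)⟩

lemma prB_exists_true (p : ℝ) (t : Finset V) (x : V) (hx : x ∈ t) :
    prB p (fun σ => ∃ y ∈ t, y ≠ x ∧ σ y = true) = 1 - (1 - p) ^ (t.card - 1) := by
  have hiff : ∀ σ : V → Bool,
      (¬ ∃ y ∈ t, y ≠ x ∧ σ y = true) ↔ (∀ y ∈ t.erase x, σ y = false) := by
    intro σ
    constructor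
    · intro hno y hy
      obtain ⟨hyx, hyt⟩ := Finset.mem_erase.mp hy
      cases h : σ y with
      | false => rfl
      | true => exact absurd ⟨y, hyt, hyx, h⟩ hno
    · rintro hall ⟨y, hyt, hyx, hys⟩
      have := hall y (Finset.mem_erase.mpr ⟨hyx, hyt⟩)
      rw [hys] at this
      exact Bool.true_eq_false_eq_False this
  have hnot : prB p (fun σ => ¬ ∃ y ∈ t, y ≠ x ∧ σ y = true) = (1-p) ^ (t.card - 1) := by
    rw [prB_congr p hiff, prB_allFalse, Finset.card_erase_of_mem hx]
  have := prB_add_not p (fun σ => ∃ y ∈ t, y ≠ x ∧ σ y = true)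
  rw [hnot] at this
  linarith

lemma main_fkg {p : ℝ} (hp0 : 0 ≤ p) (hp1 : p ≤ 1)
    (tests : F → Finset V) (x : V) (htests : ∀ a, 2 ≤ (tests a).card) :
    p * ∏ a ∈ Finset.univ.filter (fun a => x ∈ tests a),
        (1 - (1 - p) ^ ((tests a).card - 1))
      ≤ prB p (fun σ => disguisedInf tests x σ) := by
  set s := Finset.univ.filter (fun a => x ∈ tests a) with hs
  have hcongr : ∀ σ : V → Bool, disguisedInf tests x σ ↔
      (σ x = true ∧ ∀ a ∈ s, ∃ y ∈ tests a, y ≠ x ∧ σ y = true) := by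
    intro σ
    unfold disguisedInf
    constructor
    · intro ⟨h1, h2⟩
      exact ⟨h1, fun a ha => h2 a (Finset.mem_filter.mp ha).2⟩
    · intro ⟨h1, h2⟩
      exact ⟨h1, fun a ha => h2 a (Finset.mem_filter.mpr ⟨Finset.mem_univ a, ha⟩)⟩
  rw [prB_congr p hcongr]
  have hE0 : IncrE (fun σ : V → Bool => σ x = true) :=
    fun σ τ hle h => Bool.le_iff_imp.mp (hle x) h
  have hD : ∀ a : F, IncrE (fun σ : V → Bool => ∃ y ∈ tests a, y ≠ x ∧ σ y = true) :=
    fun a σ τ hle ⟨y, hy, hyx, hys⟩ => ⟨y, hy, hyx, Bool.le_iff_imp.mp (hle y) hys⟩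
  calc p * ∏ a ∈ s, (1 - (1 - p) ^ ((tests a).card - 1))
      = prB p (fun σ : V → Bool => σ x = true) *
          ∏ a ∈ s, prB p (fun σ : V → Bool => ∃ y ∈ tests a, y ≠ x ∧ σ y = true) := by
        rw [prB_coord]
        congr 1
        refine Finset.prod_congr rfl fun a ha => ?_
        rw [prB_exists_true p (tests a) x (Finset.mem_filter.mp ha).2]
    _ ≤ prB p (fun σ : V → Bool => σ x = true) *
          prB p (fun σ => ∀ a ∈ s, ∃ y ∈ tests a, y ≠ x ∧ σ y = true) := by
        refine mul_le_mul_of_nonneg_left ?_ (prB_nonneg hp0 hp1 _)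
        exact prB_harris_prod hp0 hp1 s _ (fun a _ => hD a)
    _ ≤ prB p (fun σ : V → Bool =>
          σ x = true ∧ ∀ a ∈ s, ∃ y ∈ tests a, y ≠ x ∧ σ y = true) :=
        prB_harris hp0 hp1 hE0 (IncrE_forall s _ (fun a _ => hD a))

end P5

section P6
variable {V F : Type} [Fintype V] [DecidableEq V] [Fintype F]

lemma mainLemma (d : ℕ) (tests : F → Finset V)
    (htests : ∀ a, 2 ≤ (tests a).card)
    (B : Finset V)
    (hdeg : ∀ x ∈ B, (Finset.univ.filter fun a => x ∈ tests a).card ≤ d)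
    (hdist : ∀ x ∈ B, ∀ y ∈ B, x ≠ y →
      6 ≤ (poolGraph tests).dist (Sum.inl x) (Sum.inl y))
    (p : ℝ) (hp0 : 0 < p) (hp2 : p < 1 / 2) :
    (∀ S ⊆ B, prB p (fun σ => ∀ x ∈ S, disguisedInf tests x σ)
        = ∏ x ∈ S, prB p (fun σ => disguisedInf tests x σ)) ∧
    (∀ x ∈ B,
      p * ∏ a ∈ Finset.univ.filter (fun a => x ∈ tests a),
          (1 - (1 - p) ^ ((tests a).card - 1))
        ≤ prB p (fun σ => disguisedInf tests x σ)) ∧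
    (∀ x ∈ B, p * ((1:ℝ) * p ^ d) ≤ prB p (fun σ => disguisedInf tests x σ)) ∧
    (∀ j : ℕ,
      ∑ i ∈ Finset.Icc j B.card, (B.card.choose i : ℝ) *
          (p * ((1:ℝ) * p ^ d)) ^ i * (1 - p * ((1:ℝ) * p ^ d)) ^ (B.card - i)
        ≤ prB p (fun σ => j ≤ (B.filter fun x => disguisedInf tests x σ).card)) := by
  have hp0' : (0:ℝ) ≤ p := le_of_lt hp0
  have hp1' : p ≤ 1 := by linarith
  have hdisjN : ∀ x ∈ B, ∀ y ∈ B, x ≠ y →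
      Disjoint (nbhd tests x) (nbhd tests y) :=
    fun x hx y hy hxy => nbhd_disjoint tests hxy (hdist x hx y hy hxy)
  have bullet2 : ∀ x ∈ B,
      p * ∏ a ∈ Finset.univ.filter (fun a => x ∈ tests a),
          (1 - (1 - p) ^ ((tests a).card - 1))
        ≤ prB p (fun σ => disguisedInf tests x σ) :=
    fun x _ => main_fkg hp0' hp1' tests x htests
  have bullet3 : ∀ x ∈ B, p * ((1:ℝ) * p ^ d) ≤
      prB p (fun σ => disguisedInf tests x σ) := by
    intro x hx
    set s := Finset.univ.filter (fun a => x ∈ tests a) with hs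
    have h1 : ∀ a ∈ s, p ≤ 1 - (1 - p) ^ ((tests a).card - 1) := by
      intro a _
      have hk : 1 ≤ (tests a).card - 1 := by have := htests a; omega
      have h2 : (1 - p) ^ ((tests a).card - 1) ≤ (1 - p) ^ 1 :=
        pow_le_pow_of_le_one (by linarith) (by linarith) hk
      rw [pow_one] at h2
      linarith
    have hprod : p ^ d ≤ ∏ a ∈ s, (1 - (1 - p) ^ ((tests a).card - 1)) :=
      calc p ^ d ≤ p ^ s.card := pow_le_pow_of_le_one hp0' hp1' (hdeg x hx)
        _ = ∏ _a ∈ s, p := (Finset.prod_const p).symm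
        _ ≤ ∏ a ∈ s, (1 - (1 - p) ^ ((tests a).card - 1)) :=
            Finset.prod_le_prod (fun a _ => hp0') h1
    calc p * ((1:ℝ) * p ^ d) = p * p ^ d := by ring
      _ ≤ p * ∏ a ∈ s, (1 - (1 - p) ^ ((tests a).card - 1)) :=
          mul_le_mul_of_nonneg_left hprod hp0'
      _ ≤ prB p (fun σ => disguisedInf tests x σ) := bullet2 x hx
  have bullet1 : ∀ S ⊆ B, prB p (fun σ => ∀ x ∈ S, disguisedInf tests x σ)
      = ∏ x ∈ S, prB p (fun σ => disguisedInf tests x σ) := by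
    intro S
    induction S using Finset.induction_on with
    | empty =>
      intro _
      rw [Finset.prod_empty, prB_true p _ (fun σ => by simp)]
    | @insert x S' hxS ih =>
      intro hsub
      have hxB : x ∈ B := hsub (Finset.mem_insert_self x S')
      have hS'B : S' ⊆ B := (Finset.insert_subset_iff.mp hsub).2
      have hcongr : ∀ σ : V → Bool,
          (∀ y ∈ insert x S', disguisedInf tests y σ) ↔
            (disguisedInf tests x σ ∧ ∀ y ∈ S', disguisedInf tests y σ) :=
        fun σ => Finset.forall_mem_insert x S' _
      have hG : ∀ σ τ : V → Bool, (∀ z ∉ nbhd tests x, σ z = τ z) →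
          ((∀ y ∈ S', disguisedInf tests y σ) ↔ (∀ y ∈ S', disguisedInf tests y τ)) := by
        intro σ τ h
        refine forall₂_congr fun y hy => ?_
        have hxy : x ≠ y := fun hc => hxS (hc ▸ hy)
        have hd := hdisjN x hxB y (hS'B hy) hxy
        exact disg_dep tests y σ τ fun z hz => h z (Finset.disjoint_right.mp hd hz)
      rw [prB_congr p hcongr,
        prB_factor p (nbhd tests x) (disg_dep tests x) hG, ih hS'B,
        Finset.prod_insert hxS]
  refine ⟨bullet1, bullet2, bullet3, ?_⟩
  intro j
  have hq0 : (0:ℝ) ≤ p * ((1:ℝ) * p ^ d) := by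
    have := pow_nonneg hp0' d; nlinarith
  have hq1 : p * ((1:ℝ) * p ^ d) ≤ 1 := by
    have h1 : p ^ d ≤ 1 := pow_le_one₀ hp0' hp1'
    have := pow_nonneg hp0' d
    nlinarith
  exact dominate hp0' hp1' hq0 hq1 (fun x => disguisedInf tests x) (nbhd tests) B
    (fun x hx => disg_dep tests x) hdisjN bullet3 j

end P6

/-- For a set `B` of individuals of degree at most `d`, pairwise at graph distance at
least 6, under independent Bernoulli(p) infections: the events of being totally disguised
and infected are mutually independent, each has probability at least
`p·∏_{a∋x}(1-(1-p)^{|a|-1}) ≥ p·C·p^d`, and the number of disguised infected individuals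
in `B` stochastically dominates `Bin(|B|, p·C·p^d)`. -/
theorem stmt_11 (Γ d : ℕ) (hΓ : 2 ≤ Γ) :
    ∃ C : ℝ, 0 < C ∧
      ∀ (V F : Type) (_ : Fintype V) (_ : DecidableEq V) (_ : Fintype F)
        (tests : F → Finset V),
        (∀ a, 2 ≤ (tests a).card ∧ (tests a).card ≤ Γ) →
        ∀ B : Finset V,
          (∀ x ∈ B, (Finset.univ.filter fun a => x ∈ tests a).card ≤ d) →
          (∀ x ∈ B, ∀ y ∈ B, x ≠ y →
            6 ≤ (poolGraph tests).dist (Sum.inl x) (Sum.inl y)) →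
          ∀ p : ℝ, 0 < p → p < 1 / 2 →
            -- mutual independence of the events over `B`
            (∀ S ⊆ B, prB p (fun σ => ∀ x ∈ S, disguisedInf tests x σ)
                = ∏ x ∈ S, prB p (fun σ => disguisedInf tests x σ)) ∧
            -- FKG lower bound for each individual
            (∀ x ∈ B,
              p * ∏ a ∈ Finset.univ.filter (fun a => x ∈ tests a),
                  (1 - (1 - p) ^ ((tests a).card - 1))
                ≤ prB p (fun σ => disguisedInf tests x σ)) ∧
            (∀ x ∈ B, p * (C * p ^ d) ≤ prB p (fun σ => disguisedInf tests x σ)) ∧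
            -- stochastic domination of a binomial tail
            (∀ j : ℕ,
              ∑ i ∈ Finset.Icc j B.card, (B.card.choose i : ℝ) *
                  (p * (C * p ^ d)) ^ i * (1 - p * (C * p ^ d)) ^ (B.card - i)
                ≤ prB p (fun σ => j ≤ (B.filter fun x => disguisedInf tests x σ).card)) :=
  ⟨1, one_pos, fun V F iV iDV iF tests htests B hdeg hdist p hp0 hp2 =>
    @mainLemma V F iV iDV iF d tests (fun a => (htests a).1) B hdeg hdist p hp0 hp2⟩
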